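/- For unit parameters, the critical wave speeds satisfy the strict inequalities λ̃* < λ* < √2, where λ̃* = 1/√2 is the minimum over μ < 0 of λ̃(μ) = -(√(μ⁴/4 - μ² + 5) + μ²/2 - 1)/(2μ), λ* is the minimum over μ < 0 of λ(μ) = -(√(μ⁴/4 + μ² + 5) + μ²/2 - 1)/(2μ), and √2 is the minimum over μ < 0 of λ_classical(μ) = -(1 + μ²/2)/μ. -/

import Mathlib

private lemma sqrt2_pos : (0:ℝ) < Real.sqrt 2 := Real.sqrt_pos.mpr (by norm_num)

private lemma sqrt2_sq : (Real.sqrt 2) ^ 2 = 2 := Real.sq_sqrt (by norm_num)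

/-- pointwise lower bound for the spore speed function -/
private lemma tilde_lb (μ : ℝ) (hμ : μ < 0) :
    1 / Real.sqrt 2 ≤ -(Real.sqrt (μ ^ 4 / 4 - μ ^ 2 + 5) + μ ^ 2 / 2 - 1) / (2 * μ) := by
  obtain ⟨b, hb, rfl⟩ : ∃ b : ℝ, 0 < b ∧ μ = -b := ⟨-μ, by linarith, by ring⟩
  set s := Real.sqrt 2 with hsdef
  have hs0 : 0 < s := sqrt2_pos
  have hs : s ^ 2 = 2 := sqrt2_sq
  set A : ℝ := (-b) ^ 4 / 4 - (-b) ^ 2 + 5 with hA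
  have hA0 : (0:ℝ) ≤ A := by rw [hA]; nlinarith [sq_nonneg (b ^ 2 - 2)]
  have hsqA : s * b + 1 - b ^ 2 / 2 ≤ Real.sqrt A := by
    rcases le_or_gt (s * b + 1 - b ^ 2 / 2) 0 with h | h
    · exact h.trans (Real.sqrt_nonneg _)
    · rw [show s * b + 1 - b ^ 2 / 2 = Real.sqrt ((s * b + 1 - b ^ 2 / 2) ^ 2) from
        (Real.sqrt_sq h.le).symm]
      apply Real.sqrt_le_sqrt
      have hid : A - (s * b + 1 - b ^ 2 / 2) ^ 2 - s * (b - s) ^ 2 * (b + s) = 0 := by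
        rw [hA]; linear_combination (s * b - s ^ 2 - 2) * hs
      nlinarith [mul_nonneg (mul_nonneg hs0.le (sq_nonneg (b - s))) (by linarith : (0:ℝ) ≤ b + s)]
  have e1 : -(Real.sqrt A + (-b) ^ 2 / 2 - 1) / (2 * (-b))
      = (Real.sqrt A + b ^ 2 / 2 - 1) / (2 * b) := by ring
  rw [e1, div_le_div_iff₀ hs0 (by linarith)]
  nlinarith [mul_le_mul_of_nonneg_left hsqA hs0.le]

theorem critical_speeds_strict_inequalities
    (lamTilde lam : ℝ)
    (hTilde : IsLeast {y : ℝ | ∃ μ : ℝ, μ < 0 ∧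
      y = -(Real.sqrt (μ ^ 4 / 4 - μ ^ 2 + 5) + μ ^ 2 / 2 - 1) / (2 * μ)} lamTilde)
    (hLam : IsLeast {y : ℝ | ∃ μ : ℝ, μ < 0 ∧
      y = -(Real.sqrt (μ ^ 4 / 4 + μ ^ 2 + 5) + μ ^ 2 / 2 - 1) / (2 * μ)} lam) :
    lamTilde = 1 / Real.sqrt 2 ∧ lamTilde < lam ∧ lam < Real.sqrt 2 := by
  set s := Real.sqrt 2 with hsdef
  have hs0 : 0 < s := sqrt2_pos
  have hs : s ^ 2 = 2 := sqrt2_sq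
  -- lamTilde = 1/√2
  have hmem : (1 / s) ∈ {y : ℝ | ∃ μ : ℝ, μ < 0 ∧
      y = -(Real.sqrt (μ ^ 4 / 4 - μ ^ 2 + 5) + μ ^ 2 / 2 - 1) / (2 * μ)} := by
    refine ⟨-s, by linarith, ?_⟩
    have h4 : (-s) ^ 4 / 4 - (-s) ^ 2 + 5 = 4 := by linear_combination (s ^ 2 / 4 - 1 / 2) * hs
    have hsqrt4 : Real.sqrt 4 = 2 := by
      rw [show (4:ℝ) = 2 ^ 2 by norm_num, Real.sqrt_sq (by norm_num)]
    rw [h4, hsqrt4]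
    have hs2 : (-s) ^ 2 = 2 := by linear_combination hs
    rw [hs2]
    field_simp
    norm_num
  have hT : lamTilde = 1 / s := by
    have hle1 : lamTilde ≤ 1 / s := hTilde.2 hmem
    have hle2 : 1 / s ≤ lamTilde := by
      obtain ⟨μ, hμ, rfl⟩ := hTilde.1
      exact tilde_lb μ hμ
    linarith
  refine ⟨hT, ?_, ?_⟩
  · -- lamTilde < lam
    obtain ⟨μ, hμ, heq⟩ := hLam.1
    have hμ2 : 0 < μ ^ 2 := by nlinarith [mul_pos (neg_pos.2 hμ) (neg_pos.2 hμ)]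
    have hA0 : (0:ℝ) ≤ μ ^ 4 / 4 - μ ^ 2 + 5 := by nlinarith [sq_nonneg (μ ^ 2 - 2)]
    have hlt : Real.sqrt (μ ^ 4 / 4 - μ ^ 2 + 5) < Real.sqrt (μ ^ 4 / 4 + μ ^ 2 + 5) :=
      Real.sqrt_lt_sqrt hA0 (by nlinarith)
    have hstrict : -(Real.sqrt (μ ^ 4 / 4 - μ ^ 2 + 5) + μ ^ 2 / 2 - 1) / (2 * μ)
        < -(Real.sqrt (μ ^ 4 / 4 + μ ^ 2 + 5) + μ ^ 2 / 2 - 1) / (2 * μ) := by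
      have e1 : ∀ X : ℝ, -(X + μ ^ 2 / 2 - 1) / (2 * μ) = (X + μ ^ 2 / 2 - 1) / (2 * (-μ)) := by
        intro X; ring
      rw [e1, e1]
      exact (div_lt_div_iff_of_pos_right (by linarith : (0:ℝ) < 2 * (-μ))).2 (by linarith)
    rw [hT, heq]
    calc 1 / s ≤ -(Real.sqrt (μ ^ 4 / 4 - μ ^ 2 + 5) + μ ^ 2 / 2 - 1) / (2 * μ) :=
          tilde_lb μ hμ
      _ < _ := hstrict
  · -- lam < √2
    have hmem2 : (1:ℝ) ∈ {y : ℝ | ∃ μ : ℝ, μ < 0 ∧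
        y = -(Real.sqrt (μ ^ 4 / 4 + μ ^ 2 + 5) + μ ^ 2 / 2 - 1) / (2 * μ)} := by
      refine ⟨-s, by linarith, ?_⟩
      have h8 : (-s) ^ 4 / 4 + (-s) ^ 2 + 5 = 8 := by
        linear_combination (s ^ 2 / 4 + 3 / 2) * hs
      have hsqrt8 : Real.sqrt 8 = 2 * s := by
        rw [show (8:ℝ) = (2 * s) ^ 2 by linear_combination (-4) * hs,
          Real.sqrt_sq (by linarith)]
      rw [h8, hsqrt8, show ((-s):ℝ) ^ 2 = 2 from by linear_combination hs,
        show -(2 * s + 2 / 2 - 1) / (2 * -s) = 2 * s / (2 * s) from by ring,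
        div_self (mul_ne_zero two_ne_zero hs0.ne')]
    have h1s : (1:ℝ) < s := by nlinarith
    calc lam ≤ 1 := hLam.2 hmem2
      _ < s := h1s
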